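/- With X = ℤ, supp(h_n) = {1,...,n} ∪ ℤ_{<0} and supp(h_∞) = ℕ: for any generator G and any d ∈ ℕ, the sequence defined by x_t = t for t ≤ d and x_{t+1} = G(x_1,...,x_t) for t ≥ d is a valid replay sequence for h_∞ and G; moreover, if G satisfies the non-uniform generation guarantee for h_∞ with sample complexity d, then this sequence contains infinitely many distinct elements of ℕ. -/
import Mathlib


def Out {X : Type*} (G : List X → X) (x : ℕ → X) (s : ℕ) : X :=
  G ((List.range s).map x)

def ReplaySeq {X : Type*} (h : Set X) (G : List X → X) (x : ℕ → X) : Prop :=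
  ∀ t, x t ∈ h ∨ ∃ s, 1 ≤ s ∧ s ≤ t ∧ x t = Out G x s

/-- supp(h_∞) = ℕ = {1,2,...} as a subset of ℤ. -/
def suppInf : Set ℤ := {z | 1 ≤ z}

/-- The adversarial sequence: the first `d` examples are `1,...,d`, and afterwards
each example is the generator's most recent output.  It is a valid replay sequence
for h_∞ and `G`; moreover, if `G` satisfies the non-uniform guarantee for h_∞ with
sample complexity `d`, the sequence contains infinitely many distinct elements of ℕ. -/
theorem statement3 (G : List ℤ → ℤ) (d : ℕ) (hd : 1 ≤ d) (x : ℕ → ℤ)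
    (hx1 : ∀ t < d, x t = (t : ℤ) + 1)
    (hx2 : ∀ t, d ≤ t → x t = Out G x t) :
    ReplaySeq suppInf G x ∧
      ((∀ t, ((Finset.range t).image x).card = d →
          ∀ s, t ≤ s → Out G x s ∈ suppInf ∧ ∀ r < s, Out G x s ≠ x r) →
        {z : ℤ | 1 ≤ z ∧ ∃ t, x t = z}.Infinite) := by
  constructor
  · intro t
    by_cases ht : t < d
    · left
      rw [hx1 t ht]
      simp only [suppInf, Set.mem_setOf_eq]
      omega
    · right
      exact ⟨t, le_trans hd (not_lt.1 ht), le_refl t, hx2 t (not_lt.1 ht)⟩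
  · intro H
    have hcard : ((Finset.range d).image x).card = d := by
      rw [Finset.card_image_of_injOn, Finset.card_range]
      intro a ha b hb hab
      simp only [Finset.mem_coe, Finset.mem_range] at ha hb
      rw [hx1 a ha, hx1 b hb] at hab
      exact_mod_cast add_right_cancel hab
    have key := H d hcard
    apply Set.infinite_of_injective_forall_mem (f := fun n : ℕ => x (d + n))
    case hi =>
      intro a b hab
      by_contra hne
      rcases Nat.lt_or_ge a b with h | h
      · have := (key (d + b) (Nat.le_add_right d b)).2 (d + a) (by omega)
        rw [← hx2 (d + b) (Nat.le_add_right d b)] at this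
        exact this hab.symm
      · have hba : b < a := lt_of_le_of_ne h (Ne.symm hne)
        have := (key (d + a) (Nat.le_add_right d a)).2 (d + b) (by omega)
        rw [← hx2 (d + a) (Nat.le_add_right d a)] at this
        exact this hab
    case hf =>
      intro n
      have h1 := (key (d + n) (Nat.le_add_right d n)).1
      rw [← hx2 (d + n) (Nat.le_add_right d n)] at h1
      exact ⟨h1, d + n, rfl⟩
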